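/- arXiv:1712.05075 — 2 statements merged into one kernel-verified Lean document; each statement's English description precedes it below -/
import Mathlib

section
/- Let α > -2 with α ≠ -1, and let f be a measurable function on ℂ supported in B(0,R) with R ≤ 1 satisfying |f(z)| ≤ k|z|^α. Then the Cauchy transform K(f)(ζ) = (1/(2πi)) ∫ f(z)/(z-ζ) dz∧dz̄ satisfies a bound |K(f)(ζ)| ≤ C·k·|ζ|^{min(α+1,0)} for all ζ ≠ 0, where C depends only on α. -/
open MeasureTheory Real Set
open scoped ENNReal


theorem my_lintegral_polar (f : ℝ × ℝ → ℝ≥0∞) :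
    (∫⁻ p in polarCoord.target, ENNReal.ofReal p.1 * f (polarCoord.symm p)) = ∫⁻ p, f p := by
  set B : ℝ × ℝ → ℝ × ℝ →L[ℝ] ℝ × ℝ := fun p =>
    LinearMap.toContinuousLinearMap (Matrix.toLin (Module.Basis.finTwoProd ℝ) (Module.Basis.finTwoProd ℝ)
      !![Real.cos p.2, -p.1 * Real.sin p.2; Real.sin p.2, p.1 * Real.cos p.2])
  have A : ∀ p ∈ polarCoord.target, HasFDerivWithinAt polarCoord.symm (B p) polarCoord.target p :=
    fun p _ => (hasFDerivAt_polarCoord_symm p).hasFDerivWithinAt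
  have B_det : ∀ p, (B p).det = p.1 := by
    intro p
    conv_rhs => rw [← one_mul p.1, ← cos_sq_add_sin_sq p.2]
    simp only [B, neg_mul, LinearMap.det_toContinuousLinearMap, LinearMap.det_toLin,
      Matrix.det_fin_two_of, sub_neg_eq_add]
    ring
  have hinj : Set.InjOn polarCoord.symm polarCoord.target := polarCoord.symm.injOn
  calc
    ∫⁻ p in polarCoord.target, ENNReal.ofReal p.1 * f (polarCoord.symm p)
        = ∫⁻ p in polarCoord.target, ENNReal.ofReal |(B p).det| * f (polarCoord.symm p) := by
      refine setLIntegral_congr_fun polarCoord.open_target.measurableSet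
        (fun p hp => ?_)
      rw [B_det, abs_of_pos hp.1]
    _ = ∫⁻ p in polarCoord.symm '' polarCoord.target, f p :=
      (lintegral_image_eq_lintegral_abs_det_fderiv_mul volume
        polarCoord.open_target.measurableSet A hinj f).symm
    _ = ∫⁻ p in polarCoord.source, f p := by
      rw [polarCoord.symm_image_target_eq_source]
    _ = ∫⁻ p, f p := by
      exact (setLIntegral_congr polarCoord_source_ae_eq_univ).trans (setLIntegral_univ f)



theorem my_lintegral_polar_complex (f : ℂ → ℝ≥0∞) (hf : Measurable f) :
    (∫⁻ p in polarCoord.target, ENNReal.ofReal p.1 * f (Complex.polarCoord.symm p))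
      = ∫⁻ z, f z := by
  rw [← (Complex.volume_preserving_equiv_real_prod.symm).lintegral_comp hf,
    ← my_lintegral_polar]
  rfl

theorem my_radial (g : ℝ → ℝ≥0∞) (hg : Measurable g) :
    ∫⁻ z : ℂ, g ‖z‖ = ENNReal.ofReal (2 * π) * ∫⁻ r in Ioi (0:ℝ), ENNReal.ofReal r * g r := by
  rw [← my_lintegral_polar_complex (fun z => g ‖z‖) (hg.comp measurable_norm)]
  have h1 : ∀ p : ℝ × ℝ, p ∈ polarCoord.target →
      ENNReal.ofReal p.1 * g ‖Complex.polarCoord.symm p‖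
        = ENNReal.ofReal p.1 * g p.1 := by
    intro p hp
    rw [Complex.norm_polarCoord_symm, abs_of_pos hp.1]
  rw [setLIntegral_congr_fun polarCoord.open_target.measurableSet
    h1]
  have : polarCoord.target = Ioi (0:ℝ) ×ˢ Ioo (-π) π := rfl
  rw [this, Measure.volume_eq_prod, ← Measure.prod_restrict]
  rw [lintegral_prod (fun p : ℝ × ℝ => ENNReal.ofReal p.1 * g p.1)
    ((measurable_fst.ennreal_ofReal.mul (hg.comp measurable_fst)).aemeasurable)]
  simp only [lintegral_const, Measure.restrict_apply MeasurableSet.univ, univ_inter,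
    Real.volume_Ioo]
  rw [lintegral_mul_const' (ENNReal.ofReal (π - -π)) _ (by simp), mul_comm]
  norm_num [two_mul]



theorem my_master (β a b : ℝ) (ha : 0 ≤ a) (hab : a ≤ b)
    (hi : IntervalIntegrable (fun r => r ^ (β + 1)) volume a b) :
    ∫⁻ z in Metric.closedBall (0:ℂ) b \ Metric.closedBall 0 a, ENNReal.ofReal (‖z‖ ^ β)
      = ENNReal.ofReal (2 * π * ∫ r in a..b, r ^ (β + 1)) := by
  set g : ℝ → ℝ≥0∞ := (Ioc a b).indicator (fun r => ENNReal.ofReal (r ^ β)) with hgdef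
  have hgm : Measurable g :=
    (Measurable.ennreal_ofReal (measurable_id.pow_const β)).indicator measurableSet_Ioc
  have hset : Metric.closedBall (0:ℂ) b \ Metric.closedBall 0 a
      = (fun z : ℂ => ‖z‖) ⁻¹' (Ioc a b) := by
    ext z
    simp [Metric.mem_closedBall, dist_zero_right, Set.mem_Ioc, not_le, and_comm]
  have hmeas : MeasurableSet (Metric.closedBall (0:ℂ) b \ Metric.closedBall 0 a) :=
    Metric.isClosed_closedBall.measurableSet.diff Metric.isClosed_closedBall.measurableSet
  rw [← lintegral_indicator hmeas _]
  have hind : ∀ z : ℂ,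
      (Metric.closedBall (0:ℂ) b \ Metric.closedBall 0 a).indicator
        (fun z => ENNReal.ofReal (‖z‖ ^ β)) z = g ‖z‖ := by
    intro z
    by_cases h : ‖z‖ ∈ Ioc a b <;>
      simp only [hgdef, hset, Set.indicator_apply, Set.mem_preimage, h, if_true, if_false]
    · exact Set.indicator_of_mem (Set.mem_preimage.mpr h)
        (fun z : ℂ => ENNReal.ofReal (‖z‖ ^ β))
    · exact Set.indicator_of_notMem (fun hc => h (Set.mem_preimage.mp hc))
        (fun z : ℂ => ENNReal.ofReal (‖z‖ ^ β))
  calc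
    ∫⁻ z : ℂ, (Metric.closedBall (0:ℂ) b \ Metric.closedBall 0 a).indicator
        (fun z => ENNReal.ofReal (‖z‖ ^ β)) z
        = ∫⁻ z : ℂ, g ‖z‖ := by simp_rw [hind]
    _ = ENNReal.ofReal (2 * π) * ∫⁻ r in Ioi (0:ℝ), ENNReal.ofReal r * g r :=
      my_radial g hgm
    _ = ENNReal.ofReal (2 * π) * ∫⁻ r in Ioi (0:ℝ),
          (Ioc a b).indicator (fun r => ENNReal.ofReal (r ^ (β + 1))) r := by
      congr 1
      refine setLIntegral_congr_fun measurableSet_Ioi ?_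
      intro r hr
      rw [hgdef]
      beta_reduce
      by_cases h : r ∈ Ioc a b
      · rw [Set.indicator_of_mem h, Set.indicator_of_mem h,
          Real.rpow_add_one (ne_of_gt hr), mul_comm (ENNReal.ofReal r),
          ← ENNReal.ofReal_mul (Real.rpow_nonneg hr.le β)]
      · rw [Set.indicator_of_notMem h, Set.indicator_of_notMem h, mul_zero]
    _ = ENNReal.ofReal (2 * π) * ∫⁻ r in Ioc a b, ENNReal.ofReal (r ^ (β + 1)) := by
      have hsub : Ioc a b ∩ Ioi 0 = Ioc a b :=
        inter_eq_left.mpr (fun r hr => lt_of_le_of_lt ha hr.1)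
      rw [lintegral_indicator measurableSet_Ioc _, Measure.restrict_restrict measurableSet_Ioc,
        hsub]
    _ = ENNReal.ofReal (2 * π * ∫ r in a..b, r ^ (β + 1)) := by
      rw [← ofReal_integral_eq_lintegral_ofReal
          ((intervalIntegrable_iff_integrableOn_Ioc_of_le hab).mp hi)
          (Filter.Eventually.mono (ae_restrict_mem measurableSet_Ioc)
            (fun r hr => Real.rpow_nonneg (le_trans ha hr.1.le) _)),
        intervalIntegral.integral_of_le hab,
        ← ENNReal.ofReal_mul (by positivity)]



set_option maxHeartbeats 1000000 in
/-- Weighted bound for the Cauchy transform: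
for `α > -2`, `α ≠ -1`, there is a constant `C` depending only on `α` such that for any
`R ≤ 1`, any `k ≥ 0` and any measurable `f` supported in `B(0,R)` with
`‖f z‖ ≤ k * ‖z‖ ^ α`, the Cauchy transform
`K(f)(ζ) = (1/(2πi)) ∫ f(z)/(z-ζ) dz∧dz̄ = -(1/π) ∫ f(z)/(z-ζ) dA(z)`
satisfies `‖K(f)(ζ)‖ ≤ C * k * ‖ζ‖ ^ min (α+1) 0` for every `ζ ≠ 0`. -/
theorem cauchy_transform_weighted_bound (α : ℝ) (hα : -2 < α) (hα' : α ≠ -1) :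
    ∃ C > (0:ℝ), ∀ (R k : ℝ), 0 < R → R ≤ 1 → 0 ≤ k →
      ∀ f : ℂ → ℂ, AEStronglyMeasurable f volume →
        (∀ z : ℂ, R < ‖z‖ → f z = 0) →
        (∀ z : ℂ, z ≠ 0 → ‖f z‖ ≤ k * ‖z‖ ^ α) →
        ∀ ζ : ℂ, ζ ≠ 0 →
          ‖(-(Real.pi)⁻¹ : ℝ) • ∫ z : ℂ, f z / (z - ζ)‖
            ≤ C * k * ‖ζ‖ ^ min (α + 1) 0 := by
  have hα2 : (0:ℝ) < α + 2 := by linarith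
  have hα1 : α + 1 ≠ 0 := fun h => hα' (by linarith)
  have habs : 0 < |α + 1| := abs_pos.mpr hα1
  refine ⟨4/(α+2) + 4 + 12/|α+1|, by positivity, ?_⟩
  intro R k hR hR1 hk f hf hsupp hb ζ hζ
  set t := ‖ζ‖ with htdef
  have ht : 0 < t := norm_pos_iff.mpr hζ
  set s := t/2 with hsdef
  have hs : 0 < s := half_pos ht
  set m := min s R with hmdef
  have hm0 : 0 ≤ m := le_min hs.le hR.le
  have hmR : m ≤ R := min_le_right _ _
  have hms : m ≤ s := min_le_left _ _
  set b := max s R with hbdef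
  have hsb : s ≤ b := le_max_left _ _
  set c := if α < 0 then s ^ α else 1 with hcdef
  have hc0 : 0 ≤ c := by rw [hcdef]; split <;> positivity
  -- the three sets
  set S1 : Set ℂ := Metric.closedBall (0:ℂ) m \ Metric.closedBall 0 0 with hS1def
  set S3 : Set ℂ := Metric.closedBall (0:ℂ) b \ Metric.closedBall 0 s with hS3def
  have hmeasS1 : MeasurableSet S1 :=
    Metric.isClosed_closedBall.measurableSet.diff Metric.isClosed_closedBall.measurableSet
  have hmeasS3 : MeasurableSet S3 :=
    Metric.isClosed_closedBall.measurableSet.diff Metric.isClosed_closedBall.measurableSet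
  set G1 : ℂ → ℝ≥0∞ := fun z =>
    ENNReal.ofReal (2*k/t) * S1.indicator (fun w => ENNReal.ofReal (‖w‖ ^ α)) z with hG1def
  set G2 : ℂ → ℝ≥0∞ := fun z =>
    ENNReal.ofReal (k*c) * S1.indicator (fun w => ENNReal.ofReal (‖w‖ ^ (-1:ℝ))) (z - ζ)
    with hG2def
  set G3 : ℂ → ℝ≥0∞ := fun z =>
    ENNReal.ofReal (3*k) * S3.indicator (fun w => ENNReal.ofReal (‖w‖ ^ (α-1))) z with hG3def
  have hind1 : Measurable (S1.indicator (fun w : ℂ => ENNReal.ofReal (‖w‖ ^ α))) :=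
    ((measurable_norm.pow_const α).ennreal_ofReal).indicator hmeasS1
  have hind2 : Measurable (S1.indicator (fun w : ℂ => ENNReal.ofReal (‖w‖ ^ (-1:ℝ)))) :=
    ((measurable_norm.pow_const (-1:ℝ)).ennreal_ofReal).indicator hmeasS1
  have hind3 : Measurable (S3.indicator (fun w : ℂ => ENNReal.ofReal (‖w‖ ^ (α-1)))) :=
    ((measurable_norm.pow_const (α-1)).ennreal_ofReal).indicator hmeasS3
  have hG1m : Measurable G1 := (hind1.const_mul _)
  have hG2m : Measurable G2 := ((hind2.comp (measurable_id.sub_const ζ)).const_mul _)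
  have hG3m : Measurable G3 := (hind3.const_mul _)
  -- values of 1D integrals
  have hJ1 : (∫ r in (0:ℝ)..m, r ^ (α+1)) = m ^ (α+2) / (α+2) := by
    rw [integral_rpow (Or.inl (by linarith))]
    rw [Real.zero_rpow (by intro h; rw [show α+1+1 = α+2 by ring] at h; linarith)]
    rw [show α+1+1 = α+2 by ring]
    ring
  have hJ2 : (∫ r in (0:ℝ)..m, r ^ ((-1:ℝ)+1)) = m := by
    rw [integral_rpow (Or.inl (by norm_num))]
    norm_num
  have h0uIcc : (0:ℝ) ∉ Set.uIcc s b := by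
    rw [Set.uIcc_of_le hsb]
    exact fun h => absurd h.1 (not_le.mpr hs)
  have hJ3 : (∫ r in s..b, r ^ ((α-1)+1)) = (b ^ (α+1) - s ^ (α+1)) / (α+1) := by
    rw [integral_rpow (Or.inr ⟨by intro h; rw [show α-1+1 = α by ring] at h; exact hα' h, h0uIcc⟩)]
    rw [show α-1+1+1 = α+1 by ring]
  -- lintegral values
  have hL1 : ∫⁻ z : ℂ, G1 z
      = ENNReal.ofReal (2*k/t) * ENNReal.ofReal (2*π*(m ^ (α+2)/(α+2))) := by
    rw [hG1def]
    rw [lintegral_const_mul _ hind1, lintegral_indicator hmeasS1,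
      my_master α 0 m le_rfl hm0 (intervalIntegral.intervalIntegrable_rpow' (by linarith)), hJ1]
  have hL2 : ∫⁻ z : ℂ, G2 z = ENNReal.ofReal (k*c) * ENNReal.ofReal (2*π*m) := by
    have hcomp2 : Measurable fun z : ℂ =>
        S1.indicator (fun w => ENNReal.ofReal (‖w‖ ^ (-1:ℝ))) (z - ζ) :=
      hind2.comp (measurable_id.sub_const ζ)
    rw [hG2def]
    rw [lintegral_const_mul _ hcomp2]
    congr 1
    have : ∀ z : ℂ, z - ζ = z + (-ζ) := fun z => sub_eq_add_neg z ζ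
    simp_rw [this]
    rw [lintegral_add_right_eq_self
      (S1.indicator (fun w : ℂ => ENNReal.ofReal (‖w‖ ^ (-1:ℝ)))) (-ζ)]
    rw [lintegral_indicator hmeasS1,
      my_master (-1) 0 m le_rfl hm0 (intervalIntegral.intervalIntegrable_rpow' (by norm_num)), hJ2]
  have hL3 : ∫⁻ z : ℂ, G3 z
      = ENNReal.ofReal (3*k) * ENNReal.ofReal (2*π*((b ^ (α+1) - s ^ (α+1))/(α+1))) := by
    rw [hG3def]
    rw [lintegral_const_mul _ hind3, lintegral_indicator hmeasS3,
      my_master (α-1) s b hs.le hsb (intervalIntegral.intervalIntegrable_rpow (Or.inr h0uIcc)), hJ3]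
  -- nonnegativity facts
  have hJ1n : 0 ≤ m ^ (α+2) / (α+2) := by positivity
  have hJ3n : 0 ≤ (b ^ (α+1) - s ^ (α+1)) / (α+1) := by
    rw [← hJ3]
    apply intervalIntegral.integral_nonneg hsb
    intro r hr
    exact Real.rpow_nonneg (le_trans hs.le hr.1) _
  -- pointwise domination
  have key : ∀ᵐ z : ℂ, ENNReal.ofReal ‖f z / (z - ζ)‖ ≤ G1 z + G2 z + G3 z := by
    filter_upwards [compl_mem_ae_iff.mpr (measure_singleton (0:ℂ))] with z hz
    have hz0 : z ≠ 0 := hz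
    have hzn : 0 < ‖z‖ := norm_pos_iff.mpr hz0
    rcases lt_or_ge R ‖z‖ with hzR | hzR
    · rw [hsupp z hzR, zero_div]
      simp
    have hfz := hb z hz0
    rcases le_or_gt ‖z‖ s with h1 | h1
    · -- near the origin: G1
      have hzS1 : z ∈ S1 := by
        constructor
        · rw [Metric.mem_closedBall, dist_zero_right]
          exact le_min h1 hzR
        · rw [Metric.mem_closedBall, dist_zero_right]
          simpa using hzn.ne'
      have hden : s ≤ ‖z - ζ‖ := by
        have h2 : ‖ζ‖ - ‖z‖ ≤ ‖z - ζ‖ := by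
          rw [norm_sub_rev]; exact norm_sub_norm_le ζ z
        have : s = t - s := by rw [hsdef]; ring
        linarith
      have hG1 : ENNReal.ofReal ‖f z / (z - ζ)‖ ≤ G1 z := by
        rw [hG1def]
        simp only [Set.indicator_of_mem hzS1]
        rw [← ENNReal.ofReal_mul (by positivity)]
        apply ENNReal.ofReal_le_ofReal
        rw [norm_div]
        have h3 : ‖f z‖ / ‖z - ζ‖ ≤ (k * ‖z‖ ^ α) / s :=
          div_le_div₀ (by positivity) hfz hs hden
        have h4 : (k * ‖z‖ ^ α) / s = 2*k/t * ‖z‖ ^ α := by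
          rw [hsdef]; field_simp
        linarith
      exact hG1.trans (le_add_right le_self_add)
    rcases le_or_gt ‖z - ζ‖ s with h2 | h2
    · -- near ζ: G2
      by_cases hzζ : z = ζ
      · rw [hzζ, sub_self, div_zero]
        simp
      have hw0 : z - ζ ≠ 0 := sub_ne_zero.mpr hzζ
      have hwn : 0 < ‖z - ζ‖ := norm_pos_iff.mpr hw0
      have hzS1 : z - ζ ∈ S1 := by
        constructor
        · rw [Metric.mem_closedBall, dist_zero_right]
          exact le_min h2 (h2.trans (h1.le.trans hzR))
        · rw [Metric.mem_closedBall, dist_zero_right]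
          simpa using hw0
      have hzαc : ‖z‖ ^ α ≤ c := by
        rw [hcdef]
        split_ifs with hneg
        · exact Real.rpow_le_rpow_of_nonpos hs h1.le hneg.le
        · exact Real.rpow_le_one (norm_nonneg z) (hzR.trans hR1) (not_lt.mp hneg)
      have hG2 : ENNReal.ofReal ‖f z / (z - ζ)‖ ≤ G2 z := by
        rw [hG2def]
        simp only [Set.indicator_of_mem hzS1]
        rw [← ENNReal.ofReal_mul (by positivity)]
        apply ENNReal.ofReal_le_ofReal
        rw [norm_div, Real.rpow_neg_one]
        have h3 : ‖f z‖ ≤ k * c :=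
          hfz.trans (mul_le_mul_of_nonneg_left hzαc hk)
        calc ‖f z‖ / ‖z - ζ‖ ≤ (k * c) / ‖z - ζ‖ := by gcongr
          _ = k * c * ‖z - ζ‖⁻¹ := by rw [div_eq_mul_inv]
      calc ENNReal.ofReal ‖f z / (z - ζ)‖ ≤ G2 z := hG2
        _ ≤ G1 z + G2 z + G3 z := le_add_right (le_add_self)
    · -- annulus: G3
      have hzS3 : z ∈ S3 := by
        constructor
        · rw [Metric.mem_closedBall, dist_zero_right]
          exact hzR.trans (le_max_right _ _)
        · rw [Metric.mem_closedBall, dist_zero_right]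
          exact not_le.mpr h1
      have hwn : 0 < ‖z - ζ‖ := hs.trans h2
      have h3 : ‖z‖ ≤ 3 * ‖z - ζ‖ := by
        have h4 : ‖z‖ ≤ ‖z - ζ‖ + ‖ζ‖ := by
          calc ‖z‖ = ‖(z - ζ) + ζ‖ := by rw [sub_add_cancel]
            _ ≤ ‖z - ζ‖ + ‖ζ‖ := norm_add_le _ _
        have : t = 2 * s := by rw [hsdef]; ring
        linarith
      have hG3 : ENNReal.ofReal ‖f z / (z - ζ)‖ ≤ G3 z := by
        rw [hG3def]
        simp only [Set.indicator_of_mem hzS3]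
        rw [← ENNReal.ofReal_mul (by positivity)]
        apply ENNReal.ofReal_le_ofReal
        rw [norm_div]
        have hinv : ‖z - ζ‖⁻¹ ≤ 3 * ‖z‖⁻¹ :=
          calc ‖z - ζ‖⁻¹ ≤ (‖z‖/3)⁻¹ :=
                inv_anti₀ (by positivity) (by linarith)
            _ = 3 * ‖z‖⁻¹ := by rw [inv_div, div_eq_mul_inv]
        have h5 : ‖f z‖ / ‖z - ζ‖ ≤ (k * ‖z‖ ^ α) * (3 * ‖z‖⁻¹) := by
          rw [div_eq_mul_inv]
          exact mul_le_mul hfz hinv (by positivity) (by positivity)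
        have h6 : (k * ‖z‖ ^ α) * (3 * ‖z‖⁻¹) = 3*k * ‖z‖ ^ (α-1) := by
          rw [Real.rpow_sub hzn, Real.rpow_one, div_eq_mul_inv]
          ring
        linarith
      exact hG3.trans le_add_self

  -- total bound T
  set T := 2*k/t*(2*π*(m ^ (α+2)/(α+2))) + k*c*(2*π*m)
      + 3*k*(2*π*((b ^ (α+1) - s ^ (α+1))/(α+1))) with hTdef
  have hTa : 0 ≤ 2*k/t*(2*π*(m ^ (α+2)/(α+2))) := by positivity
  have hTb : 0 ≤ k*c*(2*π*m) := by positivity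
  have hTc : 0 ≤ 3*k*(2*π*((b ^ (α+1) - s ^ (α+1))/(α+1))) :=
    mul_nonneg (by positivity) (mul_nonneg (by positivity) hJ3n)
  have hT0 : 0 ≤ T := by rw [hTdef]; linarith
  have hlint : ∫⁻ z : ℂ, ENNReal.ofReal ‖f z / (z - ζ)‖ ≤ ENNReal.ofReal T := by
    calc ∫⁻ z : ℂ, ENNReal.ofReal ‖f z / (z - ζ)‖
        ≤ ∫⁻ z : ℂ, (G1 z + G2 z + G3 z) := lintegral_mono_ae key
      _ = (∫⁻ z : ℂ, G1 z) + (∫⁻ z : ℂ, G2 z) + (∫⁻ z : ℂ, G3 z) := by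
          rw [lintegral_add_right _ hG3m, lintegral_add_right _ hG2m]
      _ = ENNReal.ofReal T := by
          rw [hL1, hL2, hL3, ← ENNReal.ofReal_mul (by positivity),
            ← ENNReal.ofReal_mul (by positivity), ← ENNReal.ofReal_mul (by positivity),
            ← ENNReal.ofReal_add hTa hTb, ← ENNReal.ofReal_add (add_nonneg hTa hTb) hTc]
  have hnorm1 : ‖(-(Real.pi)⁻¹ : ℝ) • ∫ z : ℂ, f z / (z - ζ)‖
      = π⁻¹ * ‖∫ z : ℂ, f z / (z - ζ)‖ := by
    rw [norm_smul, Real.norm_eq_abs, abs_neg, abs_inv, abs_of_pos Real.pi_pos]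
  have hnorm2 : ‖∫ z : ℂ, f z / (z - ζ)‖ ≤ T :=
    le_trans (norm_integral_le_lintegral_norm _) (ENNReal.toReal_le_of_le_ofReal hT0 hlint)
  -- elementary estimates
  have h2exp : s ^ (α+1) ≤ 2 * t ^ (α+1) := by
    have h21 : (2:ℝ) ^ (-1:ℝ) ≤ (2:ℝ) ^ (α+1) :=
      Real.rpow_le_rpow_of_exponent_le one_le_two (by linarith)
    have h22 : (0:ℝ) < t ^ (α+1) := Real.rpow_pos_of_pos ht _
    rw [Real.rpow_neg_one] at h21
    rw [hsdef, Real.div_rpow ht.le (by norm_num), div_le_iff₀ (by linarith : (0:ℝ) < (2:ℝ) ^ (α+1))]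
    nlinarith
  have hmt : m ≤ t := hms.trans (by rw [hsdef]; linarith)
  have hT1 : m ^ (α+2) / t ≤ t ^ min (α+1) 0 := by
    rcases le_or_gt (α+1) 0 with hc1 | hc1
    · rw [min_eq_left hc1, div_le_iff₀ ht]
      have h1 : m ^ (α+2) ≤ t ^ (α+2) := Real.rpow_le_rpow hm0 hmt (by linarith)
      have h2 : t ^ (α+2) = t ^ (α+1) * t := by
        rw [show (α+2) = (α+1)+1 by ring, Real.rpow_add_one ht.ne']
      linarith
    · rw [min_eq_right hc1.le, Real.rpow_zero, div_le_one ht]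
      rcases le_or_gt 1 t with hc2 | hc2
      · have h1 : m ^ (α+2) ≤ 1 := Real.rpow_le_one hm0 (hmR.trans hR1) (by linarith)
        linarith
      · have h1 : m ^ (α+2) ≤ t ^ (α+2) := Real.rpow_le_rpow hm0 hmt (by linarith)
        have h2 : t ^ (α+2) = t ^ (α+1) * t := by
          rw [show (α+2) = (α+1)+1 by ring, Real.rpow_add_one ht.ne']
        have h3 : t ^ (α+1) ≤ 1 := Real.rpow_le_one ht.le hc2.le (by linarith)
        have h4 : t ^ (α+1) * t ≤ 1 * t := mul_le_mul_of_nonneg_right h3 ht.le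
        linarith
  have hT2 : c * m ≤ 2 * t ^ min (α+1) 0 := by
    rw [hcdef]
    split_ifs with hneg
    · rcases le_or_gt (α+1) 0 with hc1 | hc1
      · rw [min_eq_left hc1]
        have h1 : s ^ α * m ≤ s ^ α * s :=
          mul_le_mul_of_nonneg_left hms (Real.rpow_nonneg hs.le α)
        have h2 : s ^ α * s = s ^ (α+1) := (Real.rpow_add_one hs.ne' α).symm
        linarith
      · rw [min_eq_right hc1.le, Real.rpow_zero, mul_one]
        rcases le_or_gt s 1 with hc2 | hc2
        · have h1 : s ^ α * m ≤ s ^ α * s :=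
            mul_le_mul_of_nonneg_left hms (Real.rpow_nonneg hs.le α)
          have h2 : s ^ α * s = s ^ (α+1) := (Real.rpow_add_one hs.ne' α).symm
          have h3 : s ^ (α+1) ≤ 1 := Real.rpow_le_one hs.le hc2 (by linarith)
          linarith
        · have h1 : s ^ α ≤ 1 := Real.rpow_le_one_of_one_le_of_nonpos hc2.le hneg.le
          have h2 : m ≤ 1 := hmR.trans hR1
          have h3 : s ^ α * m ≤ 1 * 1 :=
            mul_le_mul h1 h2 hm0 (by norm_num)
          linarith
    · have hα0 : 0 ≤ α := not_lt.mp hneg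
      rw [min_eq_right (by linarith), Real.rpow_zero, one_mul]
      linarith [hmR.trans hR1]
  have hT3 : (b ^ (α+1) - s ^ (α+1))/(α+1) ≤ 2/|α+1| * t ^ min (α+1) 0 := by
    rcases lt_or_gt_of_ne hα1 with hc1 | hc1
    · rw [min_eq_left hc1.le, abs_of_neg hc1, div_le_iff_of_neg hc1]
      have hb0 : 0 ≤ b ^ (α+1) := Real.rpow_nonneg (hs.le.trans hsb) _
      have heq : 2 / -(α+1) * t ^ (α+1) * (α+1) = -(2 * t ^ (α+1)) := by
        have hn : (-(α+1) : ℝ) ≠ 0 := neg_ne_zero.mpr hα1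
        rw [div_mul_eq_mul_div, div_mul_eq_mul_div, div_eq_iff hn]
        ring
      rw [heq]
      linarith
    · rw [min_eq_right hc1.le, abs_of_pos hc1, Real.rpow_zero, mul_one]
      have hbb : b ^ (α+1) - s ^ (α+1) ≤ 2 := by
        rcases le_total s R with hc2 | hc2
        · have hbR : b = R := max_eq_right hc2
          have h1 : b ^ (α+1) ≤ 1 := by
            rw [hbR]; exact Real.rpow_le_one hR.le hR1 hc1.le
          have h2 : 0 ≤ s ^ (α+1) := Real.rpow_nonneg hs.le _
          linarith
        · have hbs : b = s := max_eq_left hc2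
          rw [hbs, sub_self]; norm_num
      exact div_le_div₀ (by norm_num) hbb hc1 le_rfl
  -- put everything together
  have hπ : (0:ℝ) < π := Real.pi_pos
  calc ‖(-(Real.pi)⁻¹ : ℝ) • ∫ z : ℂ, f z / (z - ζ)‖
      = π⁻¹ * ‖∫ z : ℂ, f z / (z - ζ)‖ := hnorm1
    _ ≤ π⁻¹ * T := mul_le_mul_of_nonneg_left hnorm2 (by positivity)
    _ = k * (4/(α+2) * ((m ^ (α+2) * (α+2)/( α+2)) / t) + 2*(c*m)
          + 6*((b ^ (α+1) - s ^ (α+1))/(α+1))) := by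
        rw [hTdef]
        field_simp
        ring
    _ = k * (4/(α+2) * (m ^ (α+2) / t) + 2*(c*m)
          + 6*((b ^ (α+1) - s ^ (α+1))/(α+1))) := by
        rw [mul_div_assoc (m ^ (α+2)), div_self hα2.ne', mul_one]
    _ ≤ k * (4/(α+2) * t ^ min (α+1) 0 + 2*(2 * t ^ min (α+1) 0)
          + 6*(2/|α+1| * t ^ min (α+1) 0)) := by
        refine mul_le_mul_of_nonneg_left ?_ hk
        have e1 := mul_le_mul_of_nonneg_left hT1 (by positivity : (0:ℝ) ≤ 4/(α+2))
        have e2 := mul_le_mul_of_nonneg_left hT2 (by norm_num : (0:ℝ) ≤ 2)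
        have e3 := mul_le_mul_of_nonneg_left hT3 (by norm_num : (0:ℝ) ≤ 6)
        linarith
    _ = (4/(α+2) + 4 + 12/|α+1|) * k * t ^ min (α+1) 0 := by ring
end

section
/- Let α > -1 with α ≠ 0, and let f be a measurable function on ℂ supported in B(0,R), R ≤ 1, with |f(z)| ≤ k|z|^α. Then the modified Cauchy transform C(f)(ζ) = K(f)(ζ) - K(f)(0) satisfies |C(f)(ζ)| ≤ C'·k·|ζ|^{min(α+1,1)} for all ζ, where C' depends only on α. -/
open MeasureTheory Metric Set
open scoped ENNReal NNReal

namespace CTaux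

lemma meas_orn (c : ℂ) (s : ℝ) :
    Measurable fun z : ℂ => ENNReal.ofReal (‖z - c‖ ^ s) :=
  by fun_prop

lemma superlevel_subset (c : ℂ) {s t : ℝ} (hs : s < 0) (ht : 0 < t) :
    {z : ℂ | t ≤ ‖z - c‖ ^ s} ⊆ closedBall c (t ^ s⁻¹) := by
  intro z hz
  simp only [mem_setOf_eq] at hz
  rw [mem_closedBall, dist_eq_norm]
  rcases eq_or_ne z c with rfl | h
  · simp only [sub_self, norm_zero]
    positivity
  · have hzc : 0 < ‖z - c‖ := by
      simpa [sub_ne_zero] using h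
    exact (Real.le_rpow_inv_iff_of_neg hzc ht hs).mpr hz

lemma measure_superlevel_le (c : ℂ) {s t : ℝ} (hs : s < 0) (ht : 0 < t) :
    volume {z : ℂ | t ≤ ‖z - c‖ ^ s} ≤ ENNReal.ofReal (Real.pi * t ^ (2 / s)) := by
  refine (measure_mono (superlevel_subset c hs ht)).trans ?_
  rw [Complex.volume_closedBall]
  have h1 : (t ^ s⁻¹) ^ 2 = t ^ (2 / s) := by
    rw [← Real.rpow_natCast (t ^ s⁻¹) 2, ← Real.rpow_mul ht.le]
    norm_num
    rw [mul_comm, div_eq_mul_inv]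
  rw [← ENNReal.ofReal_pow (by positivity), h1, ← NNReal.coe_real_pi]
  rw [← ENNReal.ofReal_coe_nnreal (p := NNReal.pi), ← ENNReal.ofReal_mul (by positivity)]
  exact ENNReal.ofReal_le_ofReal (le_of_eq (mul_comm _ _))


lemma vol_ball_le (c₀ : ℂ) {r : ℝ} (hr : 0 ≤ r) :
    volume (ball c₀ r) ≤ ENNReal.ofReal (Real.pi * r ^ 2) := by
  rw [Complex.volume_ball, ← NNReal.coe_real_pi,
    ← ENNReal.ofReal_coe_nnreal (p := NNReal.pi), ← ENNReal.ofReal_pow hr,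
    ← ENNReal.ofReal_mul (by positivity)]
  exact ENNReal.ofReal_le_ofReal (le_of_eq (mul_comm _ _))

lemma lemA {s : ℝ} (hs1 : -2 < s) (hs2 : s < 0) (c c₀ : ℂ) {r : ℝ} (hr : 0 < r) :
    ∫⁻ z in ball c₀ r, ENNReal.ofReal (‖z - c‖ ^ s)
      ≤ ENNReal.ofReal (Real.pi * (2 / (s + 2)) * r ^ (s + 2)) := by
  have hπ := Real.pi_pos
  have hs0 : s ≠ 0 := hs2.ne
  have hs2' : (0:ℝ) < s + 2 := by linarith
  have h2s : 2 / s < -1 := by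
    rw [div_lt_iff_of_neg hs2]; linarith
  have hrs : 0 < r ^ s := Real.rpow_pos_of_pos hr s
  have hmble : Measurable fun z : ℂ => ‖z - c‖ ^ s := by fun_prop
  set μ := volume.restrict (ball c₀ r) with hμ
  rw [lintegral_eq_lintegral_meas_le μ
    (Filter.Eventually.of_forall (fun z => by positivity)) hmble.aemeasurable]
  have hsplit : (∫⁻ t in Ioi (0:ℝ), μ {z : ℂ | t ≤ ‖z - c‖ ^ s})
      ≤ (∫⁻ t in Ioc (0:ℝ) (r ^ s), μ {z : ℂ | t ≤ ‖z - c‖ ^ s})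
        + ∫⁻ t in Ioi (r ^ s), μ {z : ℂ | t ≤ ‖z - c‖ ^ s} :=
    (lintegral_mono_set Ioi_subset_Ioc_union_Ioi).trans (lintegral_union_le _ _ _)
  refine hsplit.trans ?_
  have hb1 : (∫⁻ t in Ioc (0:ℝ) (r ^ s), μ {z : ℂ | t ≤ ‖z - c‖ ^ s})
      ≤ ENNReal.ofReal (Real.pi * r ^ (s + 2)) := by
    have hle : ∀ t : ℝ, μ {z : ℂ | t ≤ ‖z - c‖ ^ s} ≤ ENNReal.ofReal (Real.pi * r ^ 2) :=
      fun t => le_trans (le_trans (measure_mono (subset_univ _))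
        (le_of_eq (Measure.restrict_apply_univ _))) (vol_ball_le c₀ hr.le)
    calc (∫⁻ t in Ioc (0:ℝ) (r ^ s), μ {z : ℂ | t ≤ ‖z - c‖ ^ s})
        ≤ ∫⁻ _ in Ioc (0:ℝ) (r ^ s), ENNReal.ofReal (Real.pi * r ^ 2) :=
          lintegral_mono fun t => hle t
      _ = ENNReal.ofReal (Real.pi * r ^ 2) * volume (Ioc (0:ℝ) (r ^ s)) :=
          setLIntegral_const _ _
      _ = ENNReal.ofReal (Real.pi * r ^ 2) * ENNReal.ofReal (r ^ s) := by
          rw [Real.volume_Ioc, sub_zero]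
      _ = ENNReal.ofReal (Real.pi * r ^ 2 * r ^ s) := by
          rw [← ENNReal.ofReal_mul (by positivity)]
      _ = ENNReal.ofReal (Real.pi * r ^ (s + 2)) := by
          congr 1
          rw [Real.rpow_add hr, mul_assoc, mul_comm (r ^ s)]
          norm_num [Real.rpow_natCast]
  have hb2 : (∫⁻ t in Ioi (r ^ s), μ {z : ℂ | t ≤ ‖z - c‖ ^ s})
      ≤ ENNReal.ofReal (Real.pi * (-(r ^ (s + 2)) / (2 / s + 1))) := by
    have hstep : (∫⁻ t in Ioi (r ^ s), μ {z : ℂ | t ≤ ‖z - c‖ ^ s})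
        ≤ ∫⁻ t in Ioi (r ^ s), ENNReal.ofReal (Real.pi * t ^ (2 / s)) := by
      refine setLIntegral_mono' measurableSet_Ioi fun t ht => ?_
      exact le_trans (Measure.restrict_le_self _)
        (measure_superlevel_le c hs2 (lt_trans hrs ht))
    refine hstep.trans ?_
    have hint : IntegrableOn (fun t : ℝ => Real.pi * t ^ (2 / s)) (Ioi (r ^ s)) :=
      (integrableOn_Ioi_rpow_of_lt h2s hrs).const_mul _
    rw [← ofReal_integral_eq_lintegral_ofReal hint
      ((ae_restrict_iff' measurableSet_Ioi).2 (ae_of_all _ fun t ht => by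
        have : (0:ℝ) < t := lt_trans hrs ht
        positivity))]
    refine ENNReal.ofReal_le_ofReal (le_of_eq ?_)
    have hexp : s * (2 / s + 1) = s + 2 := by field_simp; ring
    rw [integral_const_mul, integral_Ioi_rpow_of_lt h2s hrs, ← Real.rpow_mul hr.le, hexp]
  refine (add_le_add hb1 hb2).trans (le_of_eq ?_)
  have h1 : (0:ℝ) ≤ Real.pi * r ^ (s + 2) := by positivity
  have hq : 2 / s + 1 < 0 := by linarith
  have h2 : (0:ℝ) ≤ Real.pi * (-(r ^ (s + 2)) / (2 / s + 1)) := by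
    have hq' : (0:ℝ) < -(2 / s + 1) := by linarith
    have he : -(r ^ (s + 2)) / (2 / s + 1) = r ^ (s + 2) / (-(2 / s + 1)) := by rw [div_neg, neg_div]
    rw [he]
    positivity
  rw [← ENNReal.ofReal_add h1 h2]
  congr 1
  have hne : s + 2 ≠ 0 := hs2'.ne'
  have hne2 : (2:ℝ) + s ≠ 0 := by linarith
  have hq : 2 / s + 1 < 0 := by
    rw [div_add' _ _ _ hs0]
    exact div_neg_of_pos_of_neg (by linarith) hs2
  field_simp [hq.ne]
  ring


lemma lemD {s : ℝ} (hs : s < -2) {ρ : ℝ} (hρ : 0 < ρ) :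
    ∫⁻ z in (ball (0:ℂ) ρ)ᶜ, ENNReal.ofReal (‖z - 0‖ ^ s)
      ≤ ENNReal.ofReal (Real.pi * (s / (s + 2)) * ρ ^ (s + 2)) := by
  have hπ := Real.pi_pos
  have hs2 : s + 2 < 0 := by linarith
  have hs0 : s ≠ 0 := by linarith
  have hsneg : s < 0 := by linarith
  have h2s : -1 < 2 / s := by
    rw [neg_lt, ← neg_div]
    rw [div_lt_iff_of_neg hsneg]
    linarith
  have h2s' : 2 / s < 0 := div_neg_of_pos_of_neg two_pos hsneg
  have hρs : 0 < ρ ^ s := Real.rpow_pos_of_pos hρ s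
  have hmble : Measurable fun z : ℂ => ‖z - (0:ℂ)‖ ^ s := by fun_prop
  set μ := volume.restrict (ball (0:ℂ) ρ)ᶜ with hμ
  rw [lintegral_eq_lintegral_meas_le μ
    (Filter.Eventually.of_forall (fun z => by positivity)) hmble.aemeasurable]
  have hsplit : (∫⁻ t in Ioi (0:ℝ), μ {z : ℂ | t ≤ ‖z - 0‖ ^ s})
      ≤ (∫⁻ t in Ioc (0:ℝ) (ρ ^ s), μ {z : ℂ | t ≤ ‖z - 0‖ ^ s})
        + ∫⁻ t in Ioi (ρ ^ s), μ {z : ℂ | t ≤ ‖z - 0‖ ^ s} :=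
    (lintegral_mono_set Ioi_subset_Ioc_union_Ioi).trans (lintegral_union_le _ _ _)
  refine hsplit.trans ?_
  have hzero : ∀ t ∈ Ioi (ρ ^ s), μ {z : ℂ | t ≤ ‖z - 0‖ ^ s} = 0 := by
    intro t ht
    have hsub : {z : ℂ | t ≤ ‖z - 0‖ ^ s} ∩ (ball (0:ℂ) ρ)ᶜ = ∅ := by
      ext z
      simp only [mem_inter_iff, mem_setOf_eq, mem_compl_iff, mem_ball, not_lt, mem_empty_iff_false,
        iff_false, not_and, dist_eq_norm, sub_zero]
      intro hz hball
      have h1 : ‖z‖ ^ s ≤ ρ ^ s :=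
        Real.rpow_le_rpow_of_nonpos hρ hball hsneg.le
      have := lt_of_lt_of_le (mem_Ioi.mp ht) hz
      linarith
    have hmeas : MeasurableSet {z : ℂ | t ≤ ‖z - 0‖ ^ s} :=
      measurableSet_le measurable_const hmble
    rw [hμ, Measure.restrict_apply hmeas, hsub, measure_empty]
  rw [setLIntegral_congr_fun measurableSet_Ioi
    hzero, lintegral_zero, add_zero]
  have hstep : (∫⁻ t in Ioc (0:ℝ) (ρ ^ s), μ {z : ℂ | t ≤ ‖z - 0‖ ^ s})
      ≤ ∫⁻ t in Ioc (0:ℝ) (ρ ^ s), ENNReal.ofReal (Real.pi * t ^ (2 / s)) := by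
    refine setLIntegral_mono' measurableSet_Ioc fun t ht => ?_
    exact le_trans (Measure.restrict_le_self _) (measure_superlevel_le 0 hsneg ht.1)
  refine hstep.trans ?_
  have base : IntegrableOn (fun t : ℝ => t ^ (2 / s)) (Ioc 0 (ρ ^ s)) := by
    rw [← intervalIntegrable_iff_integrableOn_Ioc_of_le hρs.le]
    exact intervalIntegral.intervalIntegrable_rpow' h2s
  have hint : IntegrableOn (fun t : ℝ => Real.pi * t ^ (2 / s)) (Ioc 0 (ρ ^ s)) :=
    base.const_mul _
  rw [← ofReal_integral_eq_lintegral_ofReal hint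
    ((ae_restrict_iff' measurableSet_Ioc).2 (ae_of_all _ fun t ht => by
      have : (0:ℝ) < t := ht.1
      positivity))]
  refine ENNReal.ofReal_le_ofReal (le_of_eq ?_)
  rw [integral_const_mul]
  have hIoc : ∫ t in Ioc (0:ℝ) (ρ ^ s), t ^ (2 / s)
      = ((ρ ^ s) ^ (2 / s + 1) - 0 ^ (2 / s + 1)) / (2 / s + 1) := by
    rw [← intervalIntegral.integral_of_le hρs.le]
    exact integral_rpow (Or.inl h2s)
  have hzero' : (0:ℝ) ^ (2 / s + 1) = 0 := by
    rw [Real.zero_rpow]; linarith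
  have hexp : s * (2 / s + 1) = s + 2 := by field_simp; ring
  rw [hIoc, hzero', ← Real.rpow_mul hρ.le, hexp, sub_zero]
  have h1 : 2 / s + 1 = (s + 2) / s := by field_simp; ring
  rw [h1, div_div_eq_mul_div]
  ring


/-- pointwise bound used twice -/
lemma lemF {a : ℝ} (ha : -1 < a) (w z : ℂ) (hz2 : ‖z‖ < 2) (hz0 : z ≠ 0) (hzw : z ≠ w) :
    ‖z‖ ^ a * ‖z - w‖ ^ (-1:ℝ)
      ≤ 2 ^ (a + 2) * (‖z‖ ^ min (a-1) (-2⁻¹) + ‖z - w‖ ^ min (a-1) (-2⁻¹)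
          + ‖z - w‖ ^ (-1:ℝ)) := by
  set ca := min (a-1) (-2⁻¹ : ℝ) with hca
  have hz : (0:ℝ) < ‖z‖ := norm_pos_iff.mpr hz0
  have hw : (0:ℝ) < ‖z - w‖ := norm_pos_iff.mpr (sub_ne_zero.mpr hzw)
  have hca1 : ca ≤ a - 1 := min_le_left _ _
  have hca2 : ca ≤ -2⁻¹ := min_le_right _ _
  have hkey : ∀ x : ℝ, 0 < x → x < 2 → x ^ (a-1) ≤ 2 ^ (a+2) * x ^ ca := by
    intro x hx hx2
    have h1 : x ^ (a-1) = x ^ ca * x ^ (a-1-ca) := by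
      rw [← Real.rpow_add hx]; ring_nf
    have h2 : x ^ (a-1-ca) ≤ 2 ^ (a-1-ca) :=
      Real.rpow_le_rpow hx.le hx2.le (by simp [sub_nonneg, hca1])
    have h3 : (2:ℝ) ^ (a-1-ca) ≤ 2 ^ (a+2) :=
      Real.rpow_le_rpow_of_exponent_le one_le_two (by
        have : (-2:ℝ) < ca := hca ▸ lt_min (by linarith) (by norm_num)
        linarith)
    calc x ^ (a-1) = x ^ ca * x ^ (a-1-ca) := h1
      _ ≤ x ^ ca * 2 ^ (a+2) := by
          exact mul_le_mul_of_nonneg_left (h2.trans h3) (Real.rpow_nonneg hx.le _)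
      _ = 2 ^ (a+2) * x ^ ca := mul_comm _ _
  have hterm : (0:ℝ) ≤ ‖z‖ ^ ca := Real.rpow_nonneg hz.le _
  have hterm2 : (0:ℝ) ≤ ‖z - w‖ ^ ca := Real.rpow_nonneg hw.le _
  have hterm3 : (0:ℝ) ≤ ‖z - w‖ ^ (-1:ℝ) := Real.rpow_nonneg hw.le _
  have h2pos : (0:ℝ) < 2 ^ (a+2) := Real.rpow_pos_of_pos two_pos _
  rcases le_or_gt ‖z‖ ‖z - w‖ with hcmp | hcmp
  · have h1 : ‖z - w‖ ^ (-1:ℝ) ≤ ‖z‖ ^ (-1:ℝ) :=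
      Real.rpow_le_rpow_of_nonpos hz hcmp (by norm_num)
    have h2 : ‖z‖ ^ a * ‖z - w‖ ^ (-1:ℝ) ≤ ‖z‖ ^ (a-1) := by
      calc ‖z‖ ^ a * ‖z - w‖ ^ (-1:ℝ) ≤ ‖z‖ ^ a * ‖z‖ ^ (-1:ℝ) :=
            mul_le_mul_of_nonneg_left h1 (Real.rpow_nonneg hz.le _)
        _ = ‖z‖ ^ (a-1) := by rw [← Real.rpow_add hz]; ring_nf
    refine h2.trans ((hkey _ hz hz2).trans ?_)
    nlinarith
  · rcases le_or_gt 0 a with ha0 | ha0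
    · have h1 : ‖z‖ ^ a ≤ 2 ^ (a+2) := by
        calc ‖z‖ ^ a ≤ 2 ^ a := Real.rpow_le_rpow hz.le hz2.le ha0
          _ ≤ 2 ^ (a+2) := Real.rpow_le_rpow_of_exponent_le one_le_two (by linarith)
      have : ‖z‖ ^ a * ‖z - w‖ ^ (-1:ℝ) ≤ 2 ^ (a+2) * ‖z - w‖ ^ (-1:ℝ) :=
        mul_le_mul_of_nonneg_right h1 hterm3
      refine this.trans ?_
      nlinarith
    · have hw2 : ‖z - w‖ < 2 := hcmp.trans hz2
      have h1 : ‖z‖ ^ a ≤ ‖z - w‖ ^ a :=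
        Real.rpow_le_rpow_of_nonpos hw hcmp.le ha0.le
      have h2 : ‖z‖ ^ a * ‖z - w‖ ^ (-1:ℝ) ≤ ‖z - w‖ ^ (a-1) := by
        calc ‖z‖ ^ a * ‖z - w‖ ^ (-1:ℝ) ≤ ‖z - w‖ ^ a * ‖z - w‖ ^ (-1:ℝ) :=
              mul_le_mul_of_nonneg_right h1 hterm3
          _ = ‖z - w‖ ^ (a-1) := by rw [← Real.rpow_add hw]; ring_nf
      refine h2.trans ((hkey _ hw hw2).trans ?_)
      nlinarith


noncomputable def BB (s : ℝ) : ℝ := Real.pi * (2 / (s + 2)) * 2 ^ (s + 2)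

noncomputable def Mg (a : ℝ) : ℝ :=
  2 ^ (a + 2) * (BB (min (a-1) (-2⁻¹)) + BB (min (a-1) (-2⁻¹)) + BB (-1:ℝ))

lemma ae_ne_vol (c : ℂ) : ∀ᵐ z : ℂ, z ≠ c := by
  have h : volume ({c} : Set ℂ) = 0 := measure_singleton c
  rw [ae_iff]
  simp [Set.setOf_eq_eq_singleton, h]

lemma lemG {a : ℝ} (ha : -1 < a) (w : ℂ) :
    ∫⁻ z in ball (0:ℂ) 2, ENNReal.ofReal (‖z‖ ^ a * ‖z - w‖ ^ (-1:ℝ))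
      ≤ ENNReal.ofReal (Mg a) := by
  set ca := min (a-1) (-2⁻¹ : ℝ) with hca
  have hca1 : -2 < ca := lt_min (by linarith) (by norm_num)
  have hca2 : ca < 0 := lt_of_le_of_lt (min_le_right _ _) (by norm_num)
  have h2nn : (0:ℝ) ≤ 2 ^ (a+2) := Real.rpow_nonneg (by norm_num) _
  -- pointwise a.e. bound
  have hae : ∀ᵐ z ∂(volume.restrict (ball (0:ℂ) 2)),
      ENNReal.ofReal (‖z‖ ^ a * ‖z - w‖ ^ (-1:ℝ))
        ≤ ENNReal.ofReal (2 ^ (a+2))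
            * (ENNReal.ofReal (‖z‖ ^ ca) + ENNReal.ofReal (‖z - w‖ ^ ca)
              + ENNReal.ofReal (‖z - w‖ ^ (-1:ℝ))) := by
    filter_upwards [ae_restrict_mem measurableSet_ball,
      ae_restrict_of_ae (ae_ne_vol 0), ae_restrict_of_ae (ae_ne_vol w)]
      with z hzball hz0 hzw
    have hz2 : ‖z‖ < 2 := by simpa [mem_ball, dist_eq_norm] using hzball
    have hb := lemF ha w z hz2 hz0 hzw
    calc ENNReal.ofReal (‖z‖ ^ a * ‖z - w‖ ^ (-1:ℝ))
        ≤ ENNReal.ofReal (2 ^ (a+2) * (‖z‖ ^ ca + ‖z - w‖ ^ ca + ‖z - w‖ ^ (-1:ℝ))) :=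
          ENNReal.ofReal_le_ofReal hb
      _ = _ := by
          rw [ENNReal.ofReal_mul h2nn, ENNReal.ofReal_add (by positivity) (by positivity),
            ENNReal.ofReal_add (by positivity) (by positivity)]
  refine (lintegral_mono_ae hae).trans ?_
  have hm1 : Measurable fun z : ℂ => ENNReal.ofReal (‖z‖ ^ ca) := by fun_prop
  have hm2 : Measurable fun z : ℂ => ENNReal.ofReal (‖z - w‖ ^ ca) := by fun_prop
  rw [lintegral_const_mul' _ _ ENNReal.ofReal_ne_top]
  have hI1 : ∫⁻ z in ball (0:ℂ) 2, ENNReal.ofReal (‖z‖ ^ ca) ≤ ENNReal.ofReal (BB ca) := by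
    have := lemA hca1 hca2 0 0 (r := 2) two_pos
    simpa [sub_zero, BB] using this
  have hI2 : ∫⁻ z in ball (0:ℂ) 2, ENNReal.ofReal (‖z - w‖ ^ ca) ≤ ENNReal.ofReal (BB ca) :=
    lemA hca1 hca2 w 0 (r := 2) two_pos
  have hI3 : ∫⁻ z in ball (0:ℂ) 2, ENNReal.ofReal (‖z - w‖ ^ (-1:ℝ))
      ≤ ENNReal.ofReal (BB (-1:ℝ)) := lemA (by norm_num) (by norm_num) w 0 (r := 2) two_pos
  have hsum : (∫⁻ z in ball (0:ℂ) 2,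
        (ENNReal.ofReal (‖z‖ ^ ca) + ENNReal.ofReal (‖z - w‖ ^ ca)
          + ENNReal.ofReal (‖z - w‖ ^ (-1:ℝ))))
      ≤ ENNReal.ofReal (BB ca) + ENNReal.ofReal (BB ca) + ENNReal.ofReal (BB (-1:ℝ)) := by
    rw [lintegral_add_left (f := fun z => ENNReal.ofReal (‖z‖ ^ ca) + ENNReal.ofReal (‖z - w‖ ^ ca)) (hm1.add hm2), lintegral_add_left hm1]
    exact add_le_add (add_le_add hI1 hI2) hI3
  calc ENNReal.ofReal (2 ^ (a+2)) * (∫⁻ z in ball (0:ℂ) 2,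
        (ENNReal.ofReal (‖z‖ ^ ca) + ENNReal.ofReal (‖z - w‖ ^ ca)
          + ENNReal.ofReal (‖z - w‖ ^ (-1:ℝ))))
      ≤ ENNReal.ofReal (2 ^ (a+2))
          * (ENNReal.ofReal (BB ca) + ENNReal.ofReal (BB ca) + ENNReal.ofReal (BB (-1:ℝ))) :=
        mul_le_mul_right hsum _
    _ = ENNReal.ofReal (Mg a) := by
        have hBB : ∀ s : ℝ, -2 < s → s < 0 → (0:ℝ) ≤ BB s := by
          intro s h1 h2
          have : (0:ℝ) < s + 2 := by linarith
          have := Real.pi_pos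
          have h3 : (0:ℝ) ≤ 2 ^ (s+2) := Real.rpow_nonneg (by norm_num) _
          unfold BB
          positivity
        rw [← ENNReal.ofReal_add (hBB _ hca1 hca2) (hBB _ hca1 hca2),
          ← ENNReal.ofReal_add (add_nonneg (hBB _ hca1 hca2) (hBB _ hca1 hca2)) (hBB _ (by norm_num) (by norm_num)),
          ← ENNReal.ofReal_mul h2nn]
        rfl


noncomputable def Nh (α : ℝ) : ℝ :=
  2 ^ (-α) * (Real.pi * (2 / (α + 1)) + 2 * Real.pi + 4 * (Real.pi * ((α - 2) / α)))

lemma lemH {α : ℝ} (hα : -1 < α) (hα0 : α < 0) {ζ : ℂ} (hζ : ζ ≠ 0) :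
    ∫⁻ z in ball (0:ℂ) 2, ENNReal.ofReal (‖z‖ ^ (α-1) * ‖z - ζ‖ ^ (-1:ℝ))
      ≤ ENNReal.ofReal (Nh α * ‖ζ‖ ^ α) := by
  have hπ := Real.pi_pos
  have ht : 0 < ‖ζ‖ := norm_pos_iff.mpr hζ
  set u := ‖ζ‖ / 2 with hu
  have hu0 : 0 < u := by positivity
  have htu : ‖ζ‖ = 2 * u := by rw [hu]; ring
  have huα : ∀ e : ℝ, 0 < u ^ e := fun e => Real.rpow_pos_of_pos hu0 e
  set S₁ := ball (0:ℂ) u with hS₁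
  set S₂ := ball ζ u with hS₂
  set S₃ := (S₁ ∪ S₂)ᶜ with hS₃
  set F := fun z : ℂ => ENNReal.ofReal (‖z‖ ^ (α-1) * ‖z - ζ‖ ^ (-1:ℝ)) with hF
  have hnormζ : ∀ z : ℂ, ‖ζ‖ ≤ ‖z‖ + ‖z - ζ‖ := by
    intro z
    have hζeq : ζ = z - (z - ζ) := by ring
    calc ‖ζ‖ = ‖z - (z - ζ)‖ := by rw [← hζeq]
      _ ≤ ‖z‖ + ‖z - ζ‖ := norm_sub_le _ _
  have hcover : (∫⁻ z in ball (0:ℂ) 2, F z)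
      ≤ (∫⁻ z in S₁, F z) + (∫⁻ z in S₂, F z) + (∫⁻ z in S₃, F z) := by
    have h1 : ball (0:ℂ) 2 ⊆ (S₁ ∪ S₂) ∪ S₃ := by
      rw [hS₃, union_compl_self]; exact subset_univ _
    exact le_trans (lintegral_mono_set h1)
      (le_trans (lintegral_union_le _ _ _) (add_le_add_left (lintegral_union_le _ _ _) _))
  refine hcover.trans ?_
  have hx : u ^ (α - 1) * u = u ^ α := by
    rw [← Real.rpow_add_one hu0.ne' (α-1)]
    norm_num
  -- Region 1
  have hL1 : (∫⁻ z in S₁, F z) ≤ ENNReal.ofReal (Real.pi * (2 / (α + 1)) * u ^ α) := by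
    have hpt : ∀ z ∈ S₁, F z ≤ ENNReal.ofReal (u ^ (-1:ℝ)) * ENNReal.ofReal (‖z - 0‖ ^ (α-1)) := by
      intro z hz
      rw [hS₁, mem_ball, dist_eq_norm, sub_zero] at hz
      have hzζ : u ≤ ‖z - ζ‖ := by linarith [hnormζ z]
      have h2 : ‖z - ζ‖ ^ (-1:ℝ) ≤ u ^ (-1:ℝ) :=
        Real.rpow_le_rpow_of_nonpos hu0 hzζ (by norm_num)
      rw [hF, ← ENNReal.ofReal_mul (by positivity), sub_zero]
      refine ENNReal.ofReal_le_ofReal ?_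
      rw [mul_comm (u ^ (-1:ℝ))]
      exact mul_le_mul_of_nonneg_left h2 (Real.rpow_nonneg (norm_nonneg z) _)
    refine (setLIntegral_mono' measurableSet_ball hpt).trans ?_
    rw [lintegral_const_mul' _ _ ENNReal.ofReal_ne_top]
    refine le_trans (mul_le_mul_right (lemA (by linarith) (by linarith) 0 0 hu0) _) ?_
    rw [← ENNReal.ofReal_mul (by positivity)]
    refine ENNReal.ofReal_le_ofReal (le_of_eq ?_)
    have hy : u ^ (-1:ℝ) * u ^ (α - 1 + 2) = u ^ α := by
      rw [← Real.rpow_add hu0]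
      congr 1
      ring
    calc u ^ (-1:ℝ) * (Real.pi * (2 / (α - 1 + 2)) * u ^ (α - 1 + 2))
        = Real.pi * (2 / (α - 1 + 2)) * (u ^ (-1:ℝ) * u ^ (α - 1 + 2)) := by ring
      _ = Real.pi * (2 / (α + 1)) * u ^ α := by
          rw [hy, show α - 1 + 2 = α + 1 by ring]
  -- Region 2
  have hL2 : (∫⁻ z in S₂, F z) ≤ ENNReal.ofReal (2 * Real.pi * u ^ α) := by
    have hpt : ∀ z ∈ S₂, F z ≤ ENNReal.ofReal (u ^ (α-1)) * ENNReal.ofReal (‖z - ζ‖ ^ (-1:ℝ)) := by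
      intro z hz
      rw [hS₂, mem_ball, dist_eq_norm] at hz
      have hzn : u ≤ ‖z‖ := by linarith [hnormζ z]
      have h2 : ‖z‖ ^ (α-1) ≤ u ^ (α-1) :=
        Real.rpow_le_rpow_of_nonpos hu0 hzn (by linarith)
      rw [hF, ← ENNReal.ofReal_mul (by positivity)]
      exact ENNReal.ofReal_le_ofReal
        (mul_le_mul_of_nonneg_right h2 (Real.rpow_nonneg (norm_nonneg _) _))
    refine (setLIntegral_mono' measurableSet_ball hpt).trans ?_
    rw [lintegral_const_mul' _ _ ENNReal.ofReal_ne_top]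
    refine le_trans (mul_le_mul_right (lemA (by norm_num) (by norm_num) ζ ζ hu0) _) ?_
    rw [← ENNReal.ofReal_mul (by positivity)]
    refine ENNReal.ofReal_le_ofReal (le_of_eq ?_)
    rw [show (-1:ℝ) + 2 = 1 by norm_num, Real.rpow_one, ← hx]
    ring
  -- Region 3
  have hL3 : (∫⁻ z in S₃, F z)
      ≤ ENNReal.ofReal (4 * (Real.pi * ((α - 2) / α)) * u ^ α) := by
    have hpt : ∀ z ∈ S₃, F z ≤ ENNReal.ofReal (4:ℝ) * ENNReal.ofReal (‖z - 0‖ ^ (α-2)) := by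
      intro z hz
      rw [hS₃, mem_compl_iff, mem_union, not_or] at hz
      obtain ⟨hz1, hz2⟩ := hz
      rw [hS₁, mem_ball, dist_eq_norm, sub_zero, not_lt] at hz1
      rw [hS₂, mem_ball, dist_eq_norm, not_lt] at hz2
      have hzpos : 0 < ‖z‖ := lt_of_lt_of_le hu0 hz1
      have hq : ‖z‖ / 4 ≤ ‖z - ζ‖ := by
        rcases le_or_gt ‖z‖ (2 * ‖ζ‖) with hc | hc
        · linarith
        · have h2 : ‖z‖ - ‖ζ‖ ≤ ‖z - ζ‖ := by
            have := norm_sub_norm_le z ζ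
            linarith
          linarith
      have h2 : ‖z - ζ‖ ^ (-1:ℝ) ≤ (‖z‖ / 4) ^ (-1:ℝ) :=
        Real.rpow_le_rpow_of_nonpos (by positivity) hq (by norm_num)
      have h3 : (‖z‖ / 4) ^ (-1:ℝ) = 4 * ‖z‖ ^ (-1:ℝ) := by
        rw [Real.rpow_neg_one, Real.rpow_neg_one, inv_div, div_eq_mul_inv]
      have h4 : ‖z‖ ^ (α-1) * (4 * ‖z‖ ^ (-1:ℝ)) = 4 * ‖z‖ ^ (α-2) := by
        rw [show (α-2:ℝ) = (α-1) + (-1) by ring, Real.rpow_add hzpos]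
        ring
      calc F z ≤ ENNReal.ofReal (‖z‖ ^ (α-1) * (4 * ‖z‖ ^ (-1:ℝ))) := by
            rw [hF]
            exact ENNReal.ofReal_le_ofReal
              (mul_le_mul_of_nonneg_left (h3 ▸ h2) (Real.rpow_nonneg (norm_nonneg _) _))
        _ = ENNReal.ofReal (4:ℝ) * ENNReal.ofReal (‖z - 0‖ ^ (α-2)) := by
            rw [sub_zero, h4, ENNReal.ofReal_mul (by norm_num)]
    have hmS₃ : MeasurableSet S₃ := (measurableSet_ball.union measurableSet_ball).compl
    refine (setLIntegral_mono' hmS₃ hpt).trans ?_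
    rw [lintegral_const_mul' _ _ ENNReal.ofReal_ne_top]
    have hsub : S₃ ⊆ (ball (0:ℂ) u)ᶜ := by
      rw [hS₃]
      exact compl_subset_compl.mpr subset_union_left
    refine le_trans (mul_le_mul_right (lintegral_mono_set hsub) _) ?_
    refine le_trans (mul_le_mul_right (lemD (by linarith) hu0) _) ?_
    rw [← ENNReal.ofReal_mul (by norm_num)]
    refine ENNReal.ofReal_le_ofReal (le_of_eq ?_)
    rw [show α - 2 + 2 = α by ring]
    ring
  -- combine
  have hα1 : (0:ℝ) < α + 1 := by linarith
  have hc1 : (0:ℝ) ≤ Real.pi * (2 / (α + 1)) * u ^ α :=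
    mul_nonneg (mul_nonneg hπ.le (div_nonneg (by norm_num) hα1.le)) (huα α).le
  have hc2 : (0:ℝ) ≤ 2 * Real.pi * u ^ α := by positivity
  have hc3 : (0:ℝ) ≤ 4 * (Real.pi * ((α - 2) / α)) * u ^ α := by
    have h : (0:ℝ) ≤ (α - 2) / α := by
      rw [div_nonneg_iff]
      right
      constructor <;> linarith
    exact mul_nonneg (mul_nonneg (by norm_num) (mul_nonneg hπ.le h)) (huα α).le
  refine (add_le_add (add_le_add hL1 hL2) hL3).trans (le_of_eq ?_)
  rw [← ENNReal.ofReal_add hc1 hc2, ← ENNReal.ofReal_add (add_nonneg hc1 hc2) hc3]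
  congr 1
  have huα2 : u ^ α = 2 ^ (-α:ℝ) * ‖ζ‖ ^ α := by
    rw [hu, Real.div_rpow ht.le (by norm_num), Real.rpow_neg (by norm_num), div_eq_mul_inv]
    ring
  rw [huα2, Nh]
  ring






lemma support_lintegral (h : ℂ → ℝ≥0∞) (h0 : ∀ z : ℂ, z ∉ ball (0:ℂ) 2 → h z = 0) :
    ∫⁻ z, h z = ∫⁻ z in ball (0:ℂ) 2, h z := by
  rw [← lintegral_indicator measurableSet_ball]
  congr 1
  funext z
  by_cases hz : z ∈ ball (0:ℂ) 2
  · simp [indicator_of_mem hz]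
  · simp [indicator_of_notMem hz, h0 z hz]

lemma integrable_div {α R k : ℝ} (hα : -1 < α) (hR : R ≤ 1) (hk : 0 ≤ k)
    {f : ℂ → ℂ} (hfm : AEStronglyMeasurable f volume)
    (hsupp : ∀ z : ℂ, R < ‖z‖ → f z = 0)
    (hbound : ∀ z : ℂ, z ≠ 0 → ‖f z‖ ≤ k * ‖z‖ ^ α) (w : ℂ) :
    Integrable (fun z : ℂ => f z / (z - w)) volume := by
  have hmeas : AEStronglyMeasurable (fun z : ℂ => f z / (z - w)) volume := by
    have : (fun z : ℂ => f z / (z - w)) = fun z : ℂ => f z * (z - w)⁻¹ := by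
      funext z
      rw [div_eq_mul_inv]
    rw [this]
    exact hfm.mul ((measurable_id.sub_const w).inv).aestronglyMeasurable
  refine ⟨hmeas, ?_⟩
  rw [hasFiniteIntegral_iff_norm]
  set F := fun z : ℂ => ENNReal.ofReal ‖f z / (z - w)‖ with hFdef
  have hF0 : ∀ z : ℂ, z ∉ ball (0:ℂ) 2 → F z = 0 := by
    intro z hz
    rw [mem_ball, dist_zero_right, not_lt] at hz
    have : f z = 0 := hsupp z (by linarith)
    simp [hFdef, this]
  rw [show lintegral volume F = ∫⁻ z in ball (0:ℂ) 2, F z from support_lintegral F hF0]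
  have hptw : ∀ᵐ z ∂(volume.restrict (ball (0:ℂ) 2)),
      F z ≤ ENNReal.ofReal k * ENNReal.ofReal (‖z‖ ^ α * ‖z - w‖ ^ (-1:ℝ)) := by
    filter_upwards [ae_restrict_of_ae (ae_ne_vol 0), ae_restrict_of_ae (ae_ne_vol w)]
      with z hz0 hzw
    have hz : (0:ℝ) < ‖z‖ := norm_pos_iff.mpr hz0
    have hw : (0:ℝ) < ‖z - w‖ := norm_pos_iff.mpr (sub_ne_zero.mpr hzw)
    have h1 : ‖f z / (z - w)‖ ≤ k * (‖z‖ ^ α * ‖z - w‖ ^ (-1:ℝ)) := by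
      rw [norm_div, Real.rpow_neg_one]
      rw [div_eq_mul_inv, ← mul_assoc]
      exact mul_le_mul_of_nonneg_right (hbound z hz0) (by positivity)
    calc F z ≤ ENNReal.ofReal (k * (‖z‖ ^ α * ‖z - w‖ ^ (-1:ℝ))) :=
          ENNReal.ofReal_le_ofReal h1
      _ = _ := ENNReal.ofReal_mul hk
  calc (∫⁻ z in ball (0:ℂ) 2, F z)
      ≤ ∫⁻ z in ball (0:ℂ) 2,
          ENNReal.ofReal k * ENNReal.ofReal (‖z‖ ^ α * ‖z - w‖ ^ (-1:ℝ)) :=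
        lintegral_mono_ae hptw
    _ = ENNReal.ofReal k
        * ∫⁻ z in ball (0:ℂ) 2, ENNReal.ofReal (‖z‖ ^ α * ‖z - w‖ ^ (-1:ℝ)) :=
        lintegral_const_mul' _ _ ENNReal.ofReal_ne_top
    _ ≤ ENNReal.ofReal k * ENNReal.ofReal (Mg α) := mul_le_mul_right (lemG hα w) _
    _ < ⊤ := ENNReal.mul_lt_top ENNReal.ofReal_lt_top ENNReal.ofReal_lt_top

end CTaux

open CTaux

/-- Weighted bound for the modified Cauchy transform `C(f)(ζ) = K(f)(ζ) - K(f)(0)`: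
for `α > -1`, `α ≠ 0`, there is a constant `C'` depending only on `α` such that for any
`R ≤ 1`, `k ≥ 0`, and measurable `f` supported in `B(0,R)` with `‖f z‖ ≤ k * ‖z‖ ^ α`,
one has `‖C(f)(ζ)‖ ≤ C' * k * ‖ζ‖ ^ min (α+1) 1` for all `ζ`. -/
theorem modified_cauchy_transform_weighted_bound (α : ℝ) (hα : -1 < α) (hα' : α ≠ 0) :
    ∃ C' > (0:ℝ), ∀ (R k : ℝ), 0 < R → R ≤ 1 → 0 ≤ k →
      ∀ f : ℂ → ℂ, AEStronglyMeasurable f volume →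
        (∀ z : ℂ, R < ‖z‖ → f z = 0) →
        (∀ z : ℂ, z ≠ 0 → ‖f z‖ ≤ k * ‖z‖ ^ α) →
        ∀ ζ : ℂ,
          ‖((-(Real.pi)⁻¹ : ℝ) • ∫ z : ℂ, f z / (z - ζ)) -
            ((-(Real.pi)⁻¹ : ℝ) • ∫ z : ℂ, f z / (z - 0))‖
            ≤ C' * k * ‖ζ‖ ^ min (α + 1) 1 := by
  have hπ := Real.pi_pos
  set Ca := Real.pi⁻¹ * |Mg (α - 1)| + Real.pi⁻¹ * |Nh α| with hCa
  have hCa0 : 0 ≤ Ca := by positivity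
  refine ⟨1 + Ca, by positivity, ?_⟩
  intro R k h0R hR hk f hfm hsupp hbound ζ
  have hIζ : Integrable (fun z : ℂ => f z / (z - ζ)) volume :=
    integrable_div hα hR hk hfm hsupp hbound ζ
  have hI0 : Integrable (fun z : ℂ => f z / (z - 0)) volume :=
    integrable_div hα hR hk hfm hsupp hbound 0
  rw [← smul_sub, ← integral_sub hIζ hI0]
  set g := fun z : ℂ => f z * ζ / ((z - ζ) * z) with hg
  have hae : (fun z : ℂ => f z / (z - ζ) - f z / (z - 0)) =ᵐ[volume] g := by
    filter_upwards [ae_ne_vol 0, ae_ne_vol ζ] with z hz0 hzζ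
    have h1 : z - ζ ≠ 0 := sub_ne_zero.mpr hzζ
    simp only [hg, sub_zero]
    field_simp
    ring
  rw [integral_congr_ae hae, norm_smul]
  have hnrm : ‖(-(Real.pi)⁻¹ : ℝ)‖ = Real.pi⁻¹ := by
    rw [norm_neg, Real.norm_eq_abs, abs_of_pos (by positivity)]
  rw [hnrm]
  have hkey := norm_integral_le_lintegral_norm (μ := volume) g
  set G := fun z : ℂ => ENNReal.ofReal ‖g z‖ with hG
  have hG0 : ∀ z : ℂ, z ∉ ball (0:ℂ) 2 → G z = 0 := by
    intro z hz
    rw [mem_ball, dist_zero_right, not_lt] at hz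
    have hfz : f z = 0 := hsupp z (by linarith)
    simp [hG, hg, hfz]
  have hptw : ∀ᵐ z ∂(volume.restrict (ball (0:ℂ) 2)),
      G z ≤ ENNReal.ofReal (k * ‖ζ‖)
          * ENNReal.ofReal (‖z‖ ^ (α-1) * ‖z - ζ‖ ^ (-1:ℝ)) := by
    filter_upwards [ae_restrict_of_ae (ae_ne_vol 0), ae_restrict_of_ae (ae_ne_vol ζ)]
      with z hz0 hzζ
    have hz : (0:ℝ) < ‖z‖ := norm_pos_iff.mpr hz0
    have hw : (0:ℝ) < ‖z - ζ‖ := norm_pos_iff.mpr (sub_ne_zero.mpr hzζ)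
    have h1 : ‖g z‖ ≤ k * ‖ζ‖ * (‖z‖ ^ (α-1) * ‖z - ζ‖ ^ (-1:ℝ)) := by
      have heq : ‖g z‖ = ‖f z‖ * ‖ζ‖ / (‖z - ζ‖ * ‖z‖) := by
        simp [hg, norm_div, norm_mul]
      rw [heq]
      have h2 : ‖f z‖ * ‖ζ‖ / (‖z - ζ‖ * ‖z‖) ≤ k * ‖z‖ ^ α * ‖ζ‖ / (‖z - ζ‖ * ‖z‖) := by
        gcongr
        exact hbound z hz0
      refine h2.trans (le_of_eq ?_)
      rw [Real.rpow_neg_one, show (α - 1 : ℝ) = α + (-1) by ring, Real.rpow_add hz,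
        Real.rpow_neg_one]
      field_simp
    calc G z ≤ ENNReal.ofReal (k * ‖ζ‖ * (‖z‖ ^ (α-1) * ‖z - ζ‖ ^ (-1:ℝ))) :=
          ENNReal.ofReal_le_ofReal h1
      _ = _ := ENNReal.ofReal_mul (by positivity)
  have hGb : (∫⁻ z, G z) ≤ ENNReal.ofReal (k * ‖ζ‖)
      * ∫⁻ z in ball (0:ℂ) 2, ENNReal.ofReal (‖z‖ ^ (α-1) * ‖z - ζ‖ ^ (-1:ℝ)) := by
    rw [support_lintegral G hG0]
    exact (lintegral_mono_ae hptw).trans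
      (le_of_eq (lintegral_const_mul' _ _ ENNReal.ofReal_ne_top))
  rcases lt_or_gt_of_ne hα' with hneg | hpos
  · -- α < 0
    have hmin : min (α + 1) 1 = α + 1 := min_eq_left (by linarith)
    by_cases hζ0 : ζ = 0
    · have hzero : g = fun _ : ℂ => (0:ℂ) := by
        funext z
        simp [hg, hζ0]
      rw [hmin, hζ0]
      simp [hzero, Real.zero_rpow (show α + 1 ≠ 0 by linarith)]
    · have hQ := lemH hα hneg hζ0
      have htζ : (0:ℝ) < ‖ζ‖ := norm_pos_iff.mpr hζ0
      have hfin : (∫⁻ z, G z) ≤ ENNReal.ofReal (k * ‖ζ‖ * (|Nh α| * ‖ζ‖ ^ α)) := by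
        refine hGb.trans ?_
        refine (mul_le_mul_right hQ _).trans ?_
        rw [← ENNReal.ofReal_mul (by positivity)]
        refine ENNReal.ofReal_le_ofReal ?_
        have : Nh α * ‖ζ‖ ^ α ≤ |Nh α| * ‖ζ‖ ^ α :=
          mul_le_mul_of_nonneg_right (le_abs_self _) (Real.rpow_nonneg htζ.le _)
        nlinarith [mul_nonneg hk htζ.le, Real.rpow_nonneg htζ.le α, abs_nonneg (Nh α)]
      have hreal : ‖∫ z, g z‖ ≤ k * ‖ζ‖ * (|Nh α| * ‖ζ‖ ^ α) :=
        hkey.trans (ENNReal.toReal_le_of_le_ofReal (by positivity) hfin)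
      rw [hmin]
      calc Real.pi⁻¹ * ‖∫ z, g z‖
          ≤ Real.pi⁻¹ * (k * ‖ζ‖ * (|Nh α| * ‖ζ‖ ^ α)) :=
            mul_le_mul_of_nonneg_left hreal (by positivity)
        _ = (Real.pi⁻¹ * |Nh α|) * k * (‖ζ‖ * ‖ζ‖ ^ α) := by ring
        _ = (Real.pi⁻¹ * |Nh α|) * k * ‖ζ‖ ^ (α + 1) := by
            rw [Real.rpow_add_one htζ.ne' α]
            ring
        _ ≤ (1 + Ca) * k * ‖ζ‖ ^ (α + 1) := by
            have h1 : Real.pi⁻¹ * |Nh α| ≤ 1 + Ca := by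
              rw [hCa]
              have : (0:ℝ) ≤ Real.pi⁻¹ * |Mg (α - 1)| := by positivity
              linarith
            have h2 : (0:ℝ) ≤ k * ‖ζ‖ ^ (α + 1) :=
              mul_nonneg hk (Real.rpow_nonneg htζ.le _)
            nlinarith
  · -- α > 0
    have hmin : min (α + 1) 1 = 1 := min_eq_right (by linarith)
    have hQ := lemG (a := α - 1) (by linarith) ζ
    have hfin : (∫⁻ z, G z) ≤ ENNReal.ofReal (k * ‖ζ‖ * |Mg (α - 1)|) := by
      refine hGb.trans ?_
      refine (mul_le_mul_right hQ _).trans ?_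
      rw [← ENNReal.ofReal_mul (by positivity)]
      refine ENNReal.ofReal_le_ofReal ?_
      have h1 : Mg (α - 1) ≤ |Mg (α - 1)| := le_abs_self _
      nlinarith [mul_nonneg hk (norm_nonneg ζ), abs_nonneg (Mg (α - 1))]
    have hreal : ‖∫ z, g z‖ ≤ k * ‖ζ‖ * |Mg (α - 1)| :=
      hkey.trans (ENNReal.toReal_le_of_le_ofReal (by positivity) hfin)
    rw [hmin, Real.rpow_one]
    calc Real.pi⁻¹ * ‖∫ z, g z‖
        ≤ Real.pi⁻¹ * (k * ‖ζ‖ * |Mg (α - 1)|) :=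
          mul_le_mul_of_nonneg_left hreal (by positivity)
      _ = (Real.pi⁻¹ * |Mg (α - 1)|) * (k * ‖ζ‖) := by ring
      _ ≤ (1 + Ca) * (k * ‖ζ‖) := by
          have h1 : Real.pi⁻¹ * |Mg (α - 1)| ≤ 1 + Ca := by
            rw [hCa]
            have : (0:ℝ) ≤ Real.pi⁻¹ * |Nh α| := by positivity
            linarith
          have h2 : (0:ℝ) ≤ k * ‖ζ‖ := mul_nonneg hk (norm_nonneg ζ)
          nlinarith
      _ = (1 + Ca) * k * ‖ζ‖ := by ring
end
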